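/- Inversion lemma: if sequences (a_k), (b_k) satisfy a_{2n+1} = Σ_{k=0}^n C(2n+2, 2k+1) b_{2n+1−2k} for all n ≥ 0, then (2n+2) b_{2n+1} = Σ_{k=0}^n C(2n+2, 2k) d_{2k} a_{2n+1−2k}, where the numbers d_{2j} are defined by the expansion 2x/(e^x − e^{−x}) = Σ_{j≥0} d_{2j} x^{2j}/(2j)!. -/

import Mathlib

open PowerSeries Finset

private lemma sum_range_two_mul {M : Type*} [AddCommMonoid M] (f : ℕ → M) (m : ℕ) :
    ∑ i ∈ range (2 * m), f i = ∑ j ∈ range m, (f (2 * j) + f (2 * j + 1)) := by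
  induction m with
  | zero => simp
  | succ m ih =>
      rw [Nat.mul_succ, show 2*m+2 = (2*m+1)+1 from rfl, Finset.sum_range_succ,
        Finset.sum_range_succ, Finset.sum_range_succ, ih, add_assoc]

private lemma coeff_eq (d : ℕ → ℚ)
    (hd : (2 : PowerSeries ℚ) * PowerSeries.X =
        (PowerSeries.exp ℚ - PowerSeries.rescale (-1) (PowerSeries.exp ℚ)) *
          PowerSeries.mk (fun n => if n % 2 = 0 then d (n / 2) / (n.factorial : ℚ) else 0))
    (m : ℕ) :
    (if m = 0 then (2:ℚ) else 0) =
      ∑ j ∈ range (m+1),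
        2 / (((2*j+1).factorial : ℚ)) * (d (m - j) / (((2*(m-j)).factorial : ℚ))) := by
  have h := congrArg (PowerSeries.coeff (2*m+1)) hd
  rw [show (2 : PowerSeries ℚ) = PowerSeries.C 2 from (map_ofNat _ 2).symm,
    PowerSeries.coeff_C_mul, PowerSeries.coeff_X, PowerSeries.coeff_mul,
    Finset.Nat.sum_antidiagonal_eq_sum_range_succ_mk,
    show (2*m+1).succ = 2*(m+1) from by omega, sum_range_two_mul] at h
  have h2 : ∀ j ∈ range (m+1),
      ((PowerSeries.coeff (2*j)) (PowerSeries.exp ℚ - PowerSeries.rescale (-1) (PowerSeries.exp ℚ)) *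
        (PowerSeries.coeff (2*m+1-(2*j))) (PowerSeries.mk fun n => if n % 2 = 0 then d (n / 2) / (n.factorial : ℚ) else 0) +
       (PowerSeries.coeff (2*j+1)) (PowerSeries.exp ℚ - PowerSeries.rescale (-1) (PowerSeries.exp ℚ)) *
        (PowerSeries.coeff (2*m+1-(2*j+1))) (PowerSeries.mk fun n => if n % 2 = 0 then d (n / 2) / (n.factorial : ℚ) else 0)) =
      2 / (((2*j+1).factorial : ℚ)) * (d (m - j) / (((2*(m-j)).factorial : ℚ))) := by
    intro j hj
    rw [mem_range] at hj
    have e1 : 2 * m + 1 - (2 * j + 1) = 2 * (m - j) := by omega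
    have e2 : ¬ (2 * m + 1 - 2 * j) % 2 = 0 := by omega
    have p1 : ((-1 : ℚ)) ^ (2 * j) = 1 := by rw [pow_mul]; norm_num
    have p2 : ((-1 : ℚ)) ^ (2 * j + 1) = -1 := by rw [pow_succ, p1]; norm_num
    rw [map_sub, map_sub, PowerSeries.coeff_rescale, PowerSeries.coeff_rescale,
      PowerSeries.coeff_exp, PowerSeries.coeff_exp, PowerSeries.coeff_mk,
      PowerSeries.coeff_mk, e1, p1, p2, if_neg e2,
      if_pos (by omega : (2 * (m - j)) % 2 = 0),
      Nat.mul_div_cancel_left _ (by norm_num : 0 < 2)]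
    simp only [Algebra.algebraMap_self_apply]
    ring
  rw [Finset.sum_congr rfl h2] at h
  rw [← h]
  simp only [Nat.add_eq_right]
  by_cases hm : m = 0 <;> simp [hm]

private lemma key (d : ℕ → ℚ)
    (hd : (2 : PowerSeries ℚ) * PowerSeries.X =
        (PowerSeries.exp ℚ - PowerSeries.rescale (-1) (PowerSeries.exp ℚ)) *
          PowerSeries.mk (fun n => if n % 2 = 0 then d (n / 2) / (n.factorial : ℚ) else 0))
    (m : ℕ) :
    ∑ k ∈ range (m+1), (Nat.choose (2*m+1) (2*k) : ℚ) * d k = if m = 0 then 1 else 0 := by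
  have h := coeff_eq d hd m
  have h1 : ∑ j ∈ range (m+1),
        2 / (((2*j+1).factorial : ℚ)) * (d (m - j) / (((2*(m-j)).factorial : ℚ)))
      = ∑ k ∈ range (m+1),
        2 / (((2*(m-k)+1).factorial : ℚ)) * (d k / (((2*k).factorial : ℚ))) := by
    rw [← Finset.sum_range_reflect
      (fun k => 2 / (((2*(m-k)+1).factorial : ℚ)) * (d k / (((2*k).factorial : ℚ)))) (m+1)]
    refine Finset.sum_congr rfl fun j hj => ?_
    rw [mem_range] at hj
    have e1 : m + 1 - 1 - j = m - j := by omega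
    have e2 : m - (m - j) = j := by omega
    simp only [e1, e2]
  rw [h1] at h
  have h2 : ∑ k ∈ range (m+1), (Nat.choose (2*m+1) (2*k) : ℚ) * d k
      = ((2*m+1).factorial : ℚ)/2 * ∑ k ∈ range (m+1),
        2 / (((2*(m-k)+1).factorial : ℚ)) * (d k / (((2*k).factorial : ℚ))) := by
    rw [Finset.mul_sum]
    refine Finset.sum_congr rfl fun k hk => ?_
    rw [mem_range] at hk
    rw [Nat.cast_choose ℚ (show 2*k ≤ 2*m+1 by omega), show 2*m+1-2*k = 2*(m-k)+1 by omega]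
    have f1 : (((2*k).factorial : ℚ)) ≠ 0 := Nat.cast_ne_zero.mpr (Nat.factorial_ne_zero _)
    have f2 : (((2*(m-k)+1).factorial : ℚ)) ≠ 0 := Nat.cast_ne_zero.mpr (Nat.factorial_ne_zero _)
    field_simp
  rw [h2, ← h]
  by_cases hm : m = 0 <;> simp [hm]


open PowerSeries Finset in
/-- **Lemma 8 of Date–Roan (inversion lemma).**  Let the numbers `d_{2j}` be defined by
the expansion `2x/(eˣ - e⁻ˣ) = Σ_j d_{2j} x^{2j}/(2j)!`.  If sequences `(a_k)`, `(b_k)`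
satisfy `a_{2n+1} = Σ_{k=0}^n C(2n+2, 2k+1) b_{2n+1-2k}`, then
`(2n+2) b_{2n+1} = Σ_{k=0}^n C(2n+2, 2k) d_{2k} a_{2n+1-2k}`. -/
theorem inversion_lemma (d : ℕ → ℚ)
    (hd : (2 : PowerSeries ℚ) * PowerSeries.X =
        (PowerSeries.exp ℚ - PowerSeries.rescale (-1) (PowerSeries.exp ℚ)) *
          PowerSeries.mk (fun n => if n % 2 = 0 then d (n / 2) / (n.factorial : ℚ) else 0))
    (a b : ℕ → ℚ)
    (hab : ∀ n : ℕ, a (2 * n + 1) =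
        ∑ k ∈ range (n + 1),
          (Nat.choose (2 * n + 2) (2 * k + 1) : ℚ) * b (2 * n + 1 - 2 * k)) :
    ∀ n : ℕ, ((2 * n + 2 : ℕ) : ℚ) * b (2 * n + 1) =
        ∑ k ∈ range (n + 1),
          (Nat.choose (2 * n + 2) (2 * k) : ℚ) * d k * a (2 * n + 1 - 2 * k) := by
  intro n
  have step1 : ∀ k ∈ range (n+1),
      (Nat.choose (2*n+2) (2*k) : ℚ) * d k * a (2*n+1-2*k)
      = ∑ m ∈ Ico k (n+1), (Nat.choose (2*n+2) (2*m+1) : ℚ) *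
          ((Nat.choose (2*m+1) (2*k) : ℚ) * d k) * b (2*n+1-2*m) := by
    intro k hk
    rw [mem_range] at hk
    have e : 2*n+1-2*k = 2*(n-k)+1 := by omega
    rw [e, hab (n-k), Finset.mul_sum, Finset.sum_Ico_eq_sum_range,
      show n + 1 - k = n - k + 1 by omega]
    refine Finset.sum_congr rfl fun j hj => ?_
    rw [mem_range] at hj
    have e3 : 2*(n-k)+1-2*j = 2*n+1-2*(k+j) := by omega
    have tri : (Nat.choose (2*n+2) (2*(k+j)+1)) * (Nat.choose (2*(k+j)+1) (2*k))
        = (Nat.choose (2*n+2) (2*k)) * (Nat.choose (2*(n-k)+2) (2*j+1)) := by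
      have h := Nat.choose_mul (n := 2*n+2)
        (show 2*k ≤ 2*(k+j)+1 by omega)
      rw [h, show 2*n+2-2*k = 2*(n-k)+2 by omega, show 2*(k+j)+1-2*k = 2*j+1 by omega]
    have tri' := congrArg (Nat.cast : ℕ → ℚ) tri
    push_cast at tri'
    rw [e3]
    linear_combination (-(d k * b (2*n+1-2*(k+j)))) * tri'
  rw [Finset.sum_congr rfl step1]
  rw [Finset.sum_comm' (fun k m => by
    simp only [mem_range, mem_Ico]; omega :
      ∀ (k m : ℕ), (k ∈ range (n+1) ∧ m ∈ Ico k (n+1)) ↔ (k ∈ range (m+1) ∧ m ∈ range (n+1)))]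
  have step2 : ∀ m ∈ range (n+1),
      ∑ k ∈ range (m+1), (Nat.choose (2*n+2) (2*m+1) : ℚ) *
          ((Nat.choose (2*m+1) (2*k) : ℚ) * d k) * b (2*n+1-2*m)
      = if m = 0 then ((2*n+2 : ℕ) : ℚ) * b (2*n+1) else 0 := by
    intro m _
    have : ∑ k ∈ range (m+1), (Nat.choose (2*n+2) (2*m+1) : ℚ) *
          ((Nat.choose (2*m+1) (2*k) : ℚ) * d k) * b (2*n+1-2*m)
        = (Nat.choose (2*n+2) (2*m+1) : ℚ) * b (2*n+1-2*m) *
          ∑ k ∈ range (m+1), (Nat.choose (2*m+1) (2*k) : ℚ) * d k := by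
      rw [Finset.mul_sum]; refine Finset.sum_congr rfl fun k _ => ?_; ring
    rw [this, key d hd m]
    by_cases hm : m = 0
    · subst hm; simp [Nat.choose_one_right]
    · simp [hm]
  rw [Finset.sum_congr rfl step2]
  simp
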